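/- arXiv:1908.06753 — 6 statements merged into one kernel-verified Lean document; each statement's English description precedes it below -/
import Mathlib

section
/- Let p and q be free polynomials in d variables that are homogeneous of degrees j and k respectively. Then the H² norm of the product pq equals the product of the H² norms: ‖pq‖_{H²} = ‖p‖_{H²} · ‖q‖_{H²}. (In particular, a finite product of homogeneous free polynomials each of H² norm 1 again has H² norm 1.) -/
noncomputable def l2opNorm {m n : Type*} [Fintype m] [Fintype n] [DecidableEq n]
    (A : Matrix m n ℂ) : ℝ :=
  ‖LinearMap.toContinuousLinearMap (Matrix.toEuclideanLin A)‖

abbrev FreePoly (d : ℕ) := MonoidAlgebra ℂ (FreeMonoid (Fin d))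

noncomputable def freeEval {d n : ℕ} (X : Fin d → Matrix (Fin n) (Fin n) ℂ) :
    FreePoly d →ₐ[ℂ] Matrix (Fin n) (Fin n) ℂ :=
  MonoidAlgebra.lift ℂ (Matrix (Fin n) (Fin n) ℂ) (FreeMonoid (Fin d)) (FreeMonoid.lift X)

noncomputable def h2Norm {d : ℕ} (p : FreePoly d) : ℝ :=
  Real.sqrt (∑ w ∈ p.coeff.support, ‖p.coeff w‖ ^ 2)

noncomputable def rowNorm {d n : ℕ} (X : Fin d → Matrix (Fin n) (Fin n) ℂ) : ℝ :=
  l2opNorm (Matrix.of fun (i : Fin n) (p : Fin d × Fin n) => X p.1 i p.2)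

noncomputable def matEval {d n a b : ℕ} (δ : Matrix (Fin a) (Fin b) (FreePoly d))
    (X : Fin d → Matrix (Fin n) (Fin n) ℂ) : Matrix (Fin a × Fin n) (Fin b × Fin n) ℂ :=
  Matrix.of fun p q => freeEval X (δ p.1 q.1) p.2 q.2


lemma free_cancel {d : ℕ} {a₁ a₂ u v : FreeMonoid (Fin d)}
    (hl : a₁.length = u.length) (h : a₁ * a₂ = u * v) : a₁ = u ∧ a₂ = v := by
  have h' : a₁.toList ++ a₂.toList = u.toList ++ v.toList := congrArg FreeMonoid.toList h
  have := List.append_inj h' hl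
  exact ⟨FreeMonoid.toList.injective this.1, FreeMonoid.toList.injective this.2⟩

theorem stmt2' (d j k : ℕ) (p q : MonoidAlgebra ℂ (FreeMonoid (Fin d)))
    (hp : ∀ w ∈ p.coeff.support, FreeMonoid.length w = j)
    (hq : ∀ w ∈ q.coeff.support, FreeMonoid.length w = k) :
    Real.sqrt (∑ w ∈ (p*q).coeff.support, ‖(p*q).coeff w‖ ^ 2)
      = Real.sqrt (∑ w ∈ p.coeff.support, ‖p.coeff w‖ ^ 2) * Real.sqrt (∑ w ∈ q.coeff.support, ‖q.coeff w‖ ^ 2) := by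
  classical
  have coeff : ∀ u ∈ p.coeff.support, ∀ v ∈ q.coeff.support, (p * q).coeff (u * v) = p.coeff u * q.coeff v := by
    intro u hu v hv
    rw [MonoidAlgebra.coeff_mul, Finsupp.sum]
    rw [Finset.sum_eq_single u]
    · rw [Finsupp.sum, Finset.sum_eq_single v]
      · simp
      · intro b hb hne
        rw [if_neg]
        intro hc
        exact hne ((free_cancel rfl hc).2)
      · intro h; simp [Finsupp.notMem_support_iff.mp h]
    · intro b hb hne
      rw [Finsupp.sum]
      apply Finset.sum_eq_zero
      intro c hc
      rw [if_neg]
      intro he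
      exact hne (free_cancel (by rw [hp _ hu, hp _ hb]) he.symm).1.symm
    · intro h; simp [Finsupp.notMem_support_iff.mp h, Finsupp.sum]
  have hinj : Set.InjOn (fun uv : FreeMonoid (Fin d) × FreeMonoid (Fin d) => uv.1 * uv.2)
      ↑(p.coeff.support ×ˢ q.coeff.support) := by
    rintro ⟨u₁, v₁⟩ h₁ ⟨u₂, v₂⟩ h₂ h
    simp only [Finset.coe_product, Set.mem_prod, Finset.mem_coe] at h₁ h₂
    have hl : u₁.length = u₂.length := by rw [hp _ h₁.1, hp _ h₂.1]
    obtain ⟨h1, h2⟩ := free_cancel hl h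
    exact Prod.ext h1 h2
  have hsub : (p * q).coeff.support ⊆
      Finset.image (fun uv : FreeMonoid (Fin d) × FreeMonoid (Fin d) => uv.1 * uv.2)
        (p.coeff.support ×ˢ q.coeff.support) := by
    intro w hw
    have := MonoidAlgebra.support_coeff_mul_subset p q hw
    rw [Finset.mem_mul] at this
    obtain ⟨b, hb, c, hc, hbc⟩ := this
    exact Finset.mem_image.mpr ⟨(b, c), Finset.mem_product.mpr ⟨hb, hc⟩, hbc⟩
  have key : ∑ w ∈ (p * q).coeff.support, ‖(p * q).coeff w‖ ^ 2
      = (∑ u ∈ p.coeff.support, ‖p.coeff u‖ ^ 2) * (∑ v ∈ q.coeff.support, ‖q.coeff v‖ ^ 2) := by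
    rw [Finset.sum_subset hsub (by
      intro w _ hw
      simp [Finsupp.notMem_support_iff.mp hw])]
    rw [Finset.sum_image hinj]
    rw [Finset.sum_mul_sum, ← Finset.sum_product']
    apply Finset.sum_congr rfl
    rintro ⟨u, v⟩ huv
    obtain ⟨hu, hv⟩ := Finset.mem_product.mp huv
    rw [coeff u hu v hv, norm_mul, mul_pow]
  rw [key, Real.sqrt_mul (by positivity)]

/-- The H² norm is multiplicative on products of homogeneous free polynomials. -/
theorem stmt2 (d j k : ℕ) (p q : FreePoly d)
    (hp : ∀ w ∈ p.coeff.support, FreeMonoid.length w = j)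
    (hq : ∀ w ∈ q.coeff.support, FreeMonoid.length w = k) :
    h2Norm (p * q) = h2Norm p * h2Norm q :=
  stmt2' d j k p q hp hq
end

section
/- For every free polynomial p in d variables, the H² norm of p is at most the supremum of ‖p(X)‖ over all strict row contractions X: ‖p‖_{H²} ≤ sup { ‖p(X)‖ : X ∈ C^d }. -/
namespace Stmt3Aux

open Matrix Finset
open scoped Classical

noncomputable instance instW (d L : ℕ) : Fintype {w : FreeMonoid (Fin d) // w.length ≤ L} :=
  (List.finite_length_le (Fin d) L).fintype

noncomputable def NN (d L : ℕ) : ℕ := Fintype.card {w : FreeMonoid (Fin d) // w.length ≤ L}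

noncomputable def eqW (d L : ℕ) : {w : FreeMonoid (Fin d) // w.length ≤ L} ≃ Fin (NN d L) :=
  Fintype.equivFin _

noncomputable def ew (d L : ℕ) (a : Fin (NN d L)) : FreeMonoid (Fin d) := ((eqW d L).symm a).1

lemma ew_len {d L : ℕ} (a : Fin (NN d L)) : (ew d L a).length ≤ L := ((eqW d L).symm a).2

lemma ew_inj {d L : ℕ} : Function.Injective (ew d L) := fun a b h =>
  (eqW d L).symm.injective (Subtype.ext h)

lemma ew_apply {d L : ℕ} (w : FreeMonoid (Fin d)) (hw : w.length ≤ L) :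
    ew d L (eqW d L ⟨w, hw⟩) = w := by simp [ew]

noncomputable def XX (d L : ℕ) (r : ℝ) (i : Fin d) :
    Matrix (Fin (NN d L)) (Fin (NN d L)) ℂ :=
  Matrix.of fun a b => if ew d L a = FreeMonoid.of i * ew d L b then (r : ℂ) else 0

lemma eval_of {d L : ℕ} (r : ℝ) (i : Fin d) :
    freeEval (XX d L r) (MonoidAlgebra.single (FreeMonoid.of i) (1:ℂ)) = XX d L r i := by
  simp [freeEval, MonoidAlgebra.lift_single]

lemma eval_single {d L : ℕ} (r : ℝ) (w : FreeMonoid (Fin d)) :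
    ∀ a b : Fin (NN d L),
      freeEval (XX d L r) (MonoidAlgebra.single w (1:ℂ)) a b
        = if ew d L a = w * ew d L b then (r:ℂ) ^ w.length else 0 := by
  induction w using FreeMonoid.recOn with
  | one =>
    intro a b
    rw [← MonoidAlgebra.one_def, _root_.map_one, Matrix.one_apply]
    simp only [one_mul, FreeMonoid.length_one, pow_zero]
    congr 1
    simp [eq_iff_iff, ew_inj.eq_iff]
  | of_mul i w ihw =>
    intro a b
    have hs : MonoidAlgebra.single (FreeMonoid.of i * w) (1:ℂ)
        = MonoidAlgebra.single (FreeMonoid.of i) 1 * MonoidAlgebra.single w 1 := by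
      rw [MonoidAlgebra.single_mul_single, one_mul]
    rw [hs, _root_.map_mul, Matrix.mul_apply]
    simp only [eval_of, ihw, XX, Matrix.of_apply]
    by_cases h : ew d L a = FreeMonoid.of i * w * ew d L b
    · have hlen : (w * ew d L b).length ≤ L := by
        have h1 := ew_len (d := d) (L := L) a
        rw [h, mul_assoc, FreeMonoid.length_mul, FreeMonoid.length_of] at h1
        omega
      rw [if_pos h]
      rw [Finset.sum_eq_single (eqW d L ⟨w * ew d L b, hlen⟩)]
      · rw [ew_apply, if_pos, if_pos rfl]
        · rw [FreeMonoid.length_mul, FreeMonoid.length_of, pow_add, pow_one]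
        · rw [h, mul_assoc]
      · intro c _ hc
        rcases eq_or_ne (ew d L c) (w * ew d L b) with h2 | h2
        · exact absurd (ew_inj (by rw [ew_apply, h2])) (Ne.symm hc)
        · rw [if_neg h2, mul_zero]
      · intro hmem; exact absurd (Finset.mem_univ _) hmem
    · rw [if_neg h]
      apply Finset.sum_eq_zero
      intro c _
      rcases eq_or_ne (ew d L a) (FreeMonoid.of i * ew d L c) with h1 | h1
      · rcases eq_or_ne (ew d L c) (w * ew d L b) with h2 | h2
        · exact absurd (by rw [h1, h2, mul_assoc]) h
        · rw [if_neg h2, mul_zero]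
      · rw [if_neg h1, zero_mul]

end Stmt3Aux

namespace Stmt3Aux

open Matrix Finset
open scoped Classical

noncomputable def b0 (d L : ℕ) : Fin (NN d L) :=
  eqW d L ⟨1, by simp [FreeMonoid.length_one]⟩

lemma eval_col {d L : ℕ} (r : ℝ) (p : FreePoly d) (a : Fin (NN d L)) :
    freeEval (XX d L r) p a (b0 d L)
      = ∑ w ∈ p.coeff.support, p.coeff w * (if ew d L a = w then (r:ℂ) ^ w.length else 0) := by
  conv_lhs => rw [← MonoidAlgebra.sum_coeff_single p]
  rw [Finsupp.sum, map_sum, Matrix.sum_apply]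
  refine Finset.sum_congr rfl fun w hw => ?_
  have hs : MonoidAlgebra.single w (p.coeff w) = p.coeff w • MonoidAlgebra.single w (1:ℂ) := by
    rw [MonoidAlgebra.smul_single', mul_one]
  rw [hs, _root_.map_smul, Matrix.smul_apply, eval_single]
  rw [show ew d L (b0 d L) = 1 from ew_apply _ _, mul_one]
  simp [b0, ew_apply, smul_eq_mul]

lemma eval_col_at {d L : ℕ} (r : ℝ) (p : FreePoly d) (w : FreeMonoid (Fin d))
    (hw : w ∈ p.coeff.support) (hl : w.length ≤ L) :
    freeEval (XX d L r) p (eqW d L ⟨w, hl⟩) (b0 d L) = p.coeff w * (r:ℂ) ^ w.length := by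
  rw [eval_col, Finset.sum_eq_single w]
  · rw [ew_apply, if_pos rfl]
  · intro w' _ hne
    rw [ew_apply, if_neg (fun h => hne h.symm), mul_zero]
  · intro h; exact absurd hw h

lemma le_l2opNorm {m n : Type*} [Fintype m] [Fintype n] [DecidableEq n] (A : Matrix m n ℂ)
    (v : EuclideanSpace ℂ n) : ‖Matrix.toEuclideanLin A v‖ ≤ l2opNorm A * ‖v‖ := by
  have := (LinearMap.toContinuousLinearMap (Matrix.toEuclideanLin A)).le_opNorm v
  simpa [l2opNorm] using this

lemma l2opNorm_le_bound {m n : Type*} [Fintype m] [Fintype n] [DecidableEq n]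
    (A : Matrix m n ℂ) {c : ℝ} (hc : 0 ≤ c)
    (h : ∀ v : EuclideanSpace ℂ n, ‖Matrix.toEuclideanLin A v‖ ≤ c * ‖v‖) :
    l2opNorm A ≤ c :=
  ContinuousLinearMap.opNorm_le_bound _ hc fun v => by simpa using h v

lemma sq_norm_sum_le {ι : Type*} (s : Finset ι) (f : ι → ℂ)
    (h : ∀ i ∈ s, ∀ j ∈ s, f i ≠ 0 → f j ≠ 0 → i = j) :
    ‖∑ i ∈ s, f i‖ ^ 2 ≤ ∑ i ∈ s, ‖f i‖ ^ 2 := by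
  by_cases he : ∀ i ∈ s, f i = 0
  · have h1 : ∑ i ∈ s, f i = 0 := Finset.sum_eq_zero he
    rw [h1]
    simpa using Finset.sum_nonneg (fun i _ => sq_nonneg ‖f i‖)
  · push_neg at he
    obtain ⟨i0, hi0, hne⟩ := he
    rw [Finset.sum_eq_single_of_mem i0 hi0 (fun j hj hji => by
      by_contra hfj; exact hji (h j hj i0 hi0 hfj hne))]
    exact Finset.single_le_sum (fun i _ => sq_nonneg ‖f i‖) hi0

lemma sum_ite_ew_le {d L : ℕ} (w : FreeMonoid (Fin d)) (x : ℝ) (hx : 0 ≤ x) :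
    ∑ a : Fin (NN d L), (if ew d L a = w then x else 0) ≤ x := by
  by_cases he : ∃ a, ew d L a = w
  · obtain ⟨a0, ha0⟩ := he
    rw [Finset.sum_eq_single a0
      (fun c _ hc => if_neg (fun h => hc (ew_inj (h.trans ha0.symm))))
      (fun h => absurd (Finset.mem_univ _) h)]
    rw [if_pos ha0]
  · rw [Finset.sum_eq_zero (fun a _ => if_neg (fun h => he ⟨a, h⟩))]
    exact hx

lemma cons_inj {d : ℕ} {i i' : Fin d} {t t' : FreeMonoid (Fin d)}
    (h : FreeMonoid.of i * t = FreeMonoid.of i' * t') : i = i' ∧ t = t' := by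
  have h2 := congrArg FreeMonoid.toList h
  rw [FreeMonoid.toList_of_mul, FreeMonoid.toList_of_mul] at h2
  obtain ⟨h3, h4⟩ := List.cons.injEq .. ▸ h2
  exact ⟨h3, FreeMonoid.toList.injective h4⟩

lemma rowNorm_XX_le {d L : ℕ} {r : ℝ} (hr0 : 0 ≤ r) : rowNorm (XX d L r) ≤ r := by
  apply l2opNorm_le_bound _ hr0
  intro v
  set A : Matrix (Fin (NN d L)) (Fin d × Fin (NN d L)) ℂ :=
    Matrix.of fun a (q : Fin d × Fin (NN d L)) => XX d L r q.1 a q.2 with hA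
  have key : ∀ a : Fin (NN d L), ‖(Matrix.toEuclideanLin A v) a‖ ^ 2
      ≤ ∑ q : Fin d × Fin (NN d L),
          (if ew d L a = FreeMonoid.of q.1 * ew d L q.2 then r^2 * ‖v q‖^2 else 0) := by
    intro a
    have h1 : (Matrix.toEuclideanLin A v) a
        = ∑ q : Fin d × Fin (NN d L),
            (if ew d L a = FreeMonoid.of q.1 * ew d L q.2 then (r:ℂ) else 0) * v q := by
      simp [Matrix.toEuclideanLin_apply, Matrix.mulVec, dotProduct, hA, XX]
    rw [h1]
    refine le_trans (sq_norm_sum_le Finset.univ _ ?_) (Finset.sum_le_sum fun q _ => ?_)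
    · intro q _ q' _ hq hq'
      have hcq : ew d L a = FreeMonoid.of q.1 * ew d L q.2 := by
        by_contra hc; rw [if_neg hc, zero_mul] at hq; exact hq rfl
      have hcq' : ew d L a = FreeMonoid.of q'.1 * ew d L q'.2 := by
        by_contra hc; rw [if_neg hc, zero_mul] at hq'; exact hq' rfl
      obtain ⟨h5, h6⟩ := cons_inj (hcq.symm.trans hcq')
      exact Prod.ext h5 (ew_inj h6)
    · by_cases hc : ew d L a = FreeMonoid.of q.1 * ew d L q.2
      · rw [if_pos hc, if_pos hc, norm_mul, mul_pow]
        gcongr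
        rw [Complex.norm_real, Real.norm_eq_abs, abs_of_nonneg hr0]
      · rw [if_neg hc, if_neg hc, zero_mul, norm_zero]
        simp
  have h2 : ‖Matrix.toEuclideanLin A v‖ ^ 2 ≤ r^2 * ‖v‖^2 := by
    rw [EuclideanSpace.norm_eq, Real.sq_sqrt (Finset.sum_nonneg fun a _ => sq_nonneg _)]
    calc ∑ a : Fin (NN d L), ‖(Matrix.toEuclideanLin A v) a‖ ^ 2
        ≤ ∑ a : Fin (NN d L), ∑ q : Fin d × Fin (NN d L),
            (if ew d L a = FreeMonoid.of q.1 * ew d L q.2 then r^2 * ‖v q‖^2 else 0) :=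
          Finset.sum_le_sum fun a _ => key a
      _ = ∑ q : Fin d × Fin (NN d L), ∑ a : Fin (NN d L),
            (if ew d L a = FreeMonoid.of q.1 * ew d L q.2 then r^2 * ‖v q‖^2 else 0) :=
          Finset.sum_comm
      _ ≤ ∑ q : Fin d × Fin (NN d L), r^2 * ‖v q‖^2 :=
          Finset.sum_le_sum fun q _ => sum_ite_ew_le _ _ (by positivity)
      _ = r^2 * ‖v‖^2 := by
          rw [← Finset.mul_sum, EuclideanSpace.norm_eq,
            Real.sq_sqrt (Finset.sum_nonneg fun q _ => sq_nonneg _)]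
  calc ‖Matrix.toEuclideanLin A v‖
      = Real.sqrt (‖Matrix.toEuclideanLin A v‖ ^ 2) := (Real.sqrt_sq (norm_nonneg _)).symm
    _ ≤ Real.sqrt (r^2 * ‖v‖^2) := Real.sqrt_le_sqrt h2
    _ = r * ‖v‖ := by
        rw [← mul_pow, Real.sqrt_sq (by positivity)]

end Stmt3Aux

namespace Stmt3Aux

open Matrix Finset
open scoped Classical

lemma lower {d L : ℕ} (r : ℝ) (hr0 : 0 ≤ r) (p : FreePoly d)
    (hL : ∀ w ∈ p.coeff.support, FreeMonoid.length w ≤ L) :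
    Real.sqrt (∑ w ∈ p.coeff.support, ‖p.coeff w‖^2 * r^(2 * w.length))
      ≤ l2opNorm (freeEval (XX d L r) p) := by
  set A := freeEval (XX d L r) p with hAdef
  have h1 := le_l2opNorm A (EuclideanSpace.single (b0 d L) (1:ℂ))
  rw [EuclideanSpace.norm_single, norm_one, mul_one] at h1
  refine le_trans ?_ h1
  have h2 : ∀ a : Fin (NN d L),
      (Matrix.toEuclideanLin A (EuclideanSpace.single (b0 d L) (1:ℂ))) a = A a (b0 d L) := by
    intro a
    simp [Matrix.toEuclideanLin_apply, Matrix.mulVec, dotProduct,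
      EuclideanSpace.single_apply]
  rw [EuclideanSpace.norm_eq]
  simp only [h2]
  apply Real.sqrt_le_sqrt
  rw [← Finset.sum_attach p.coeff.support (fun w => ‖p.coeff w‖^2 * r^(2*w.length))]
  set g : {w // w ∈ p.coeff.support} → Fin (NN d L) := fun x => eqW d L ⟨x.1, hL x.1 x.2⟩ with hg
  have hginj : Function.Injective g := by
    intro x y hxy
    have h' := (eqW d L).injective hxy
    rw [Subtype.mk.injEq] at h'
    exact Subtype.ext h'
  have hval : ∀ x : {w // w ∈ p.coeff.support},
      ‖A (g x) (b0 d L)‖^2 = ‖p.coeff x.1‖^2 * r^(2*x.1.length) := by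
    intro x
    rw [hAdef, hg, eval_col_at r p x.1 x.2 (hL x.1 x.2), norm_mul, mul_pow, norm_pow,
      Complex.norm_real, Real.norm_eq_abs, abs_of_nonneg hr0, ← pow_mul, mul_comm x.1.length 2]
  calc ∑ x ∈ p.coeff.support.attach, ‖p.coeff x.1‖^2 * r^(2*x.1.length)
      = ∑ x ∈ p.coeff.support.attach, ‖A (g x) (b0 d L)‖^2 :=
        Finset.sum_congr rfl fun x _ => (hval x).symm
    _ = ∑ a ∈ p.coeff.support.attach.image g, ‖A a (b0 d L)‖^2 :=
        (Finset.sum_image (f := fun a => ‖A a (b0 d L)‖^2) (fun x _ y _ h => hginj h)).symm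
    _ ≤ ∑ a : Fin (NN d L), ‖A a (b0 d L)‖^2 :=
        Finset.sum_le_sum_of_subset_of_nonneg (Finset.subset_univ _)
          (fun a _ _ => sq_nonneg _)

lemma key {d : ℕ} (p : FreePoly d) {r : ℝ} (hr0 : 0 ≤ r) (hr1 : r < 1) :
    ENNReal.ofReal (r ^ (p.coeff.support.sup FreeMonoid.length) * h2Norm p)
      ≤ ⨆ (n : ℕ) (X : Fin d → Matrix (Fin n) (Fin n) ℂ) (_ : rowNorm X < 1),
          ENNReal.ofReal (l2opNorm (freeEval X p)) := by
  set L := p.coeff.support.sup FreeMonoid.length with hLdef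
  have hL : ∀ w ∈ p.coeff.support, FreeMonoid.length w ≤ L := fun w hw => Finset.le_sup hw
  have hrow : rowNorm (XX d L r) < 1 := lt_of_le_of_lt (rowNorm_XX_le hr0) hr1
  have hlow : r^L * h2Norm p ≤ l2opNorm (freeEval (XX d L r) p) := by
    refine le_trans ?_ (lower r hr0 p hL)
    rw [h2Norm, ← Real.sqrt_sq (by positivity : (0:ℝ) ≤ r^L), ← Real.sqrt_mul (by positivity)]
    apply Real.sqrt_le_sqrt
    rw [Finset.mul_sum]
    refine Finset.sum_le_sum fun w hw => ?_
    rw [mul_comm ((r^L)^2)]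
    have hpow : (r^L)^2 ≤ r^(2 * w.length) := by
      rw [← pow_mul]
      exact pow_le_pow_of_le_one hr0 hr1.le (by have := hL w hw; omega)
    exact mul_le_mul_of_nonneg_left hpow (sq_nonneg _)
  calc ENNReal.ofReal (r^L * h2Norm p)
      ≤ ENNReal.ofReal (l2opNorm (freeEval (XX d L r) p)) := ENNReal.ofReal_le_ofReal hlow
    _ ≤ _ := by
        refine le_iSup_of_le (NN d L) (le_iSup_of_le (XX d L r) ?_)
        exact le_iSup_of_le hrow le_rfl

end Stmt3Aux

/-- The H² norm of a free polynomial is dominated by its sup norm over the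
row ball (the supremum, possibly infinite, is taken in ℝ≥0∞). -/
theorem stmt3 (d : ℕ) (p : FreePoly d) :
    ENNReal.ofReal (h2Norm p) ≤
      ⨆ (n : ℕ) (X : Fin d → Matrix (Fin n) (Fin n) ℂ) (_ : rowNorm X < 1),
        ENNReal.ofReal (l2opNorm (freeEval X p)) := by
  set L := p.coeff.support.sup FreeMonoid.length with hLdef
  have hkey : ∀ k : ℕ,
      ENNReal.ofReal ((1 - 1/((k:ℝ)+1))^L * h2Norm p)
        ≤ ⨆ (n : ℕ) (X : Fin d → Matrix (Fin n) (Fin n) ℂ) (_ : rowNorm X < 1),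
            ENNReal.ofReal (l2opNorm (freeEval X p)) := by
    intro k
    have hk1 : (0:ℝ) < (k:ℝ) + 1 := by positivity
    refine Stmt3Aux.key p ?_ ?_
    · have : 1/((k:ℝ)+1) ≤ 1 := by
        rw [div_le_one hk1]; linarith [Nat.cast_nonneg (α := ℝ) k]
      linarith
    · have : 0 < 1/((k:ℝ)+1) := by positivity
      linarith
  have ht : Filter.Tendsto (fun k : ℕ => ENNReal.ofReal ((1 - 1/((k:ℝ)+1))^L * h2Norm p))
      Filter.atTop (nhds (ENNReal.ofReal (h2Norm p))) := by
    have h1 : Filter.Tendsto (fun k : ℕ => 1 - 1/((k:ℝ)+1)) Filter.atTop (nhds 1) := by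
      have h0 := tendsto_one_div_add_atTop_nhds_zero_nat (𝕜 := ℝ)
      have := (tendsto_const_nhds (α := ℕ) (f := Filter.atTop) (x := (1:ℝ))).sub h0
      simpa using this
    have h2 := (h1.pow L).mul_const (h2Norm p)
    rw [one_pow, one_mul] at h2
    exact (ENNReal.continuous_ofReal.tendsto _).comp h2
  exact le_of_tendsto' ht hkey
end

section
/- Let q₁,…,q_N be free polynomials in d variables such that each q_i is homogeneous of degree k_i with the degrees k₁,…,k_N pairwise distinct, and ‖q_i‖_{H²} = 1 for each i. Then sup { ‖(q₁ + ⋯ + q_N)(X)‖ : X ∈ C^d } ≥ √N. -/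
abbrev WLe (d K : ℕ) := {w : List (Fin d) // w.length ≤ K}

noncomputable instance (d K : ℕ) : Fintype (WLe d K) :=
  Fintype.ofInjective (fun l (j : Fin K) => l.1[j.1]?) (by
    rintro ⟨l₁, h₁⟩ ⟨l₂, h₂⟩ h
    ext1
    apply List.ext_getElem?
    intro n
    by_cases hn : n < K
    · exact congrFun h ⟨n, hn⟩
    · rw [List.getElem?_eq_none (h₁.trans (le_of_not_gt hn)),
        List.getElem?_eq_none (h₂.trans (le_of_not_gt hn))])

namespace Stmt7

noncomputable def nn (d K : ℕ) : ℕ := Fintype.card (WLe d K)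
noncomputable def eqv (d K : ℕ) : WLe d K ≃ Fin (nn d K) := Fintype.equivFin _
noncomputable def wd {d K : ℕ} (a : Fin (nn d K)) : List (Fin d) := ((eqv d K).symm a).1

lemma wd_len {d K : ℕ} (a : Fin (nn d K)) : (wd a).length ≤ K := ((eqv d K).symm a).2

lemma wd_inj {d K : ℕ} : Function.Injective (wd (d := d) (K := K)) := by
  intro a b h
  have := Subtype.ext (p := fun w : List (Fin d) => w.length ≤ K) h
  exact (eqv d K).symm.injective this

noncomputable def idx {d K : ℕ} (w : List (Fin d)) (h : w.length ≤ K) : Fin (nn d K) :=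
  eqv d K ⟨w, h⟩

@[simp] lemma wd_idx {d K : ℕ} (w : List (Fin d)) (h : w.length ≤ K) : wd (idx w h) = w := by
  simp [wd, idx]

noncomputable def Xmat (d K : ℕ) (r : ℝ) (i : Fin d) :
    Matrix (Fin (nn d K)) (Fin (nn d K)) ℂ :=
  Matrix.of fun a b => if wd a = i :: wd b then (r : ℂ) else 0

lemma prod_entry {d K : ℕ} (r : ℝ) (u : List (Fin d)) (a b : Fin (nn d K)) :
    (u.map (Xmat d K r)).prod a b
      = if wd a = u ++ wd b then ((r : ℂ)) ^ u.length else 0 := by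
  induction u generalizing a with
  | nil =>
      simp only [List.map_nil, List.prod_nil, List.nil_append, List.length_nil, pow_zero]
      rw [Matrix.one_apply]
      simp [wd_inj.eq_iff, eq_comm]
  | cons i u ih =>
      rw [List.map_cons, List.prod_cons, Matrix.mul_apply]
      by_cases h : wd a = i :: (u ++ wd b)
      · have hlen : (u ++ wd b).length ≤ K := by
          have h2 := wd_len a
          rw [h] at h2
          exact Nat.le_of_succ_le h2
        rw [Finset.sum_eq_single (idx (u ++ wd b) hlen)]
        · rw [ih]
          simp [Xmat, h, pow_succ, mul_comm]
        · intro c _ hc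
          rw [ih]
          by_cases hc2 : wd c = u ++ wd b
          · exact absurd (wd_inj (by rw [hc2, wd_idx])) hc
          · simp [hc2]
        · intro hmem; exact absurd (Finset.mem_univ _) hmem
      · rw [List.cons_append, if_neg h]
        apply Finset.sum_eq_zero
        intro c _
        rw [ih]
        by_cases hc2 : wd c = u ++ wd b
        · have : wd a ≠ i :: wd c := by rw [hc2]; exact h
          simp [Xmat, this]
        · simp [hc2]

end Stmt7

instance (priority := high) {α : Type*} [DecidableEq α] : DecidableEq (FreeMonoid α) :=
  fun a b => decidable_of_iff (FreeMonoid.toList a = FreeMonoid.toList b)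
    FreeMonoid.toList.injective.eq_iff

namespace Stmt7

noncomputable def vac (d K : ℕ) : Fin (nn d K) := idx [] (Nat.zero_le K)

lemma eval_vac {d K : ℕ} (r : ℝ) (p : FreePoly d) (a : Fin (nn d K)) :
    freeEval (Xmat d K r) p a (vac d K) =
      ∑ u ∈ p.coeff.support,
        p.coeff u * (if wd a = FreeMonoid.toList u then (r : ℂ) ^ (FreeMonoid.toList u).length else 0) := by
  have h1 : freeEval (Xmat d K r) p
      = ∑ u ∈ p.coeff.support, p.coeff u • ((FreeMonoid.toList u).map (Xmat d K r)).prod := by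
    rw [freeEval, MonoidAlgebra.lift_apply, Finsupp.sum]
    exact Finset.sum_congr rfl fun u _ => by rw [FreeMonoid.lift_apply]
  rw [h1, Matrix.sum_apply]
  apply Finset.sum_congr rfl
  intro u hu
  rw [Matrix.smul_apply, prod_entry, smul_eq_mul]
  have hv : wd (vac d K) = ([] : List (Fin d)) := by simp [vac]
  rw [hv, List.append_nil]

lemma sum_sq {d K : ℕ} {r : ℝ} (hr : 0 ≤ r) (p : FreePoly d)
    (hsup : ∀ u ∈ p.coeff.support, (FreeMonoid.toList u).length ≤ K) :
    ∑ a, ‖freeEval (Xmat d K r) p a (vac d K)‖ ^ 2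
      = ∑ u ∈ p.coeff.support, ‖p.coeff u‖ ^ 2 * (r ^ 2) ^ (FreeMonoid.toList u).length := by
  rw [← Equiv.sum_comp (eqv d K) (fun a => ‖freeEval (Xmat d K r) p a (vac d K)‖ ^ 2)]
  have key : ∀ w : WLe d K, freeEval (Xmat d K r) p (eqv d K w) (vac d K)
      = if FreeMonoid.ofList w.1 ∈ p.coeff.support
          then p.coeff (FreeMonoid.ofList w.1) * (r : ℂ) ^ w.1.length else 0 := by
    intro w
    rw [eval_vac]
    have hw : wd ((eqv d K) w) = w.1 := by simp [wd]
    have step : ∀ u ∈ p.coeff.support,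
        p.coeff u * (if wd ((eqv d K) w) = FreeMonoid.toList u
                then (r : ℂ) ^ (FreeMonoid.toList u).length else 0)
          = if u = FreeMonoid.ofList w.1 then p.coeff u * (r : ℂ) ^ w.1.length else 0 := by
      intro u hu
      rw [hw, mul_ite, mul_zero]
      by_cases h : u = FreeMonoid.ofList w.1
      · rw [if_pos (show w.1 = FreeMonoid.toList u by rw [h, FreeMonoid.toList_ofList]),
          if_pos h, h, FreeMonoid.toList_ofList]
      · rw [if_neg (fun hc => h (by rw [hc, FreeMonoid.ofList_toList])), if_neg h]
    rw [Finset.sum_congr rfl step, Finset.sum_ite_eq' p.coeff.support]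
  calc ∑ w : WLe d K, ‖freeEval (Xmat d K r) p (eqv d K w) (vac d K)‖ ^ 2
      = ∑ w : WLe d K, (if FreeMonoid.ofList w.1 ∈ p.coeff.support
          then ‖p.coeff (FreeMonoid.ofList w.1)‖ ^ 2 * (r ^ 2) ^ w.1.length else 0) := by
        apply Finset.sum_congr rfl
        intro w _
        rw [key w, apply_ite (fun z : ℂ => ‖z‖ ^ 2)]
        simp only [norm_zero, ne_eq, OfNat.ofNat_ne_zero, not_false_eq_true, zero_pow]
        congr 1
        rw [norm_mul, mul_pow, norm_pow, Complex.norm_real, Real.norm_eq_abs,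
          abs_of_nonneg hr, ← pow_mul, ← pow_mul, Nat.mul_comm]
    _ = ∑ u ∈ p.coeff.support, ‖p.coeff u‖ ^ 2 * (r ^ 2) ^ (FreeMonoid.toList u).length := by
        rw [← Finset.sum_filter]
        refine Finset.sum_bij' (i := fun (w : WLe d K) _ => FreeMonoid.ofList w.1)
          (j := fun u hu => (⟨FreeMonoid.toList u, hsup u hu⟩ : WLe d K))
          ?_ ?_ ?_ ?_ ?_
        · intro w hw
          exact (Finset.mem_filter.mp hw).2
        · intro u hu
          simp only [Finset.mem_filter, Finset.mem_univ, true_and, FreeMonoid.ofList_toList]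
          exact hu
        · intro w hw
          exact Subtype.ext (by simp [FreeMonoid.toList_ofList])
        · intro u hu
          simp [FreeMonoid.ofList_toList]
        · intro w hw
          simp [FreeMonoid.toList_ofList]


open Matrix in

lemma lower_bound {m : ℕ} (M : Matrix (Fin m) (Fin m) ℂ) (j : Fin m) :
    Real.sqrt (∑ a, ‖M a j‖ ^ 2) ≤ l2opNorm M := by
  have hv : ‖(EuclideanSpace.single j (1 : ℂ) : EuclideanSpace ℂ (Fin m))‖ = 1 := by
    rw [EuclideanSpace.norm_single, norm_one]
  have h := (LinearMap.toContinuousLinearMap (Matrix.toEuclideanLin M)).le_opNorm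
    (EuclideanSpace.single j (1 : ℂ))
  rw [hv, mul_one] at h
  refine le_trans (le_of_eq ?_) h
  have happ : (LinearMap.toContinuousLinearMap (Matrix.toEuclideanLin M))
      (EuclideanSpace.single j (1 : ℂ))
      = (WithLp.equiv 2 (Fin m → ℂ)).symm (M *ᵥ Pi.single j 1) := by
    rfl
  rw [happ, EuclideanSpace.norm_eq]
  congr 1
  apply Finset.sum_congr rfl
  intro a _
  rw [show (WithLp.equiv 2 (Fin m → ℂ)).symm (M *ᵥ Pi.single j 1) a
      = (M *ᵥ Pi.single j 1) a from rfl, Matrix.mulVec_single]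
  simp

end Stmt7

namespace Stmt7
open Matrix

lemma tail_len {d K : ℕ} (a : Fin (nn d K)) : (wd a).tail.length ≤ K := by
  rw [List.length_tail]
  exact le_trans (Nat.sub_le _ _) (wd_len a)

lemma row_bound {d K : ℕ} {r : ℝ} (hr : 0 ≤ r) : rowNorm (Xmat d K r) ≤ r := by
  apply ContinuousLinearMap.opNorm_le_bound _ hr
  intro x
  by_cases hd : d = 0
  · subst hd
    have hx : x = 0 := by ext p; exact Fin.elim0 p.1
    rw [hx, map_zero, norm_zero]
    positivity
  · set R := Matrix.of fun (a : Fin (nn d K)) (p : Fin d × Fin (nn d K)) =>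
      Xmat d K r p.1 a p.2 with hR
    set y : Fin d × Fin (nn d K) → ℂ := WithLp.equiv 2 _ x with hy
    have hTx : (LinearMap.toContinuousLinearMap (Matrix.toEuclideanLin R)) x
        = (WithLp.equiv 2 (Fin (nn d K) → ℂ)).symm (R *ᵥ y) := rfl
    have i₀ : Fin d := ⟨0, Nat.pos_of_ne_zero hd⟩
    -- the "shift" map
    set ψ : Fin (nn d K) → Fin d × Fin (nn d K) := fun a =>
      if h : wd a ≠ [] then ((wd a).head h, idx (wd a).tail (tail_len a)) else (i₀, a) with hψ
    set S : Finset (Fin (nn d K)) := Finset.univ.filter (fun a => wd a ≠ []) with hS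
    have hψS : ∀ a ∈ S, wd a = (ψ a).1 :: wd (ψ a).2 := by
      intro a ha
      have h : wd a ≠ [] := (Finset.mem_filter.mp ha).2
      simp only [hψ, dif_pos h, wd_idx]
      exact (List.cons_head_tail h).symm
    have hcomp : ∀ a, (R *ᵥ y) a = if a ∈ S then (r : ℂ) * y (ψ a) else 0 := by
      intro a
      by_cases ha : a ∈ S
      · rw [if_pos ha]
        show (∑ p, R a p * y p) = (r : ℂ) * y (ψ a)
        rw [Finset.sum_eq_single (ψ a)]
        · show (if wd a = (ψ a).1 :: wd (ψ a).2 then (r:ℂ) else 0) * y (ψ a) = _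
          rw [if_pos (hψS a ha)]
        · rintro ⟨i, b⟩ _ hne
          show (if wd a = i :: wd b then (r:ℂ) else 0) * y (i, b) = 0
          by_cases hw : wd a = i :: wd b
          · exfalso
            apply hne
            have h : wd a ≠ [] := by rw [hw]; exact List.cons_ne_nil _ _
            have h1 : (wd a).head h = i := by simp only [hw, List.head_cons]
            have h2 : (wd a).tail = wd b := by rw [hw]; simp
            have h3 : idx (wd a).tail (tail_len a) = b := by
              apply wd_inj; rw [wd_idx, h2]
            simp only [hψ, dif_pos h]
            rw [h1, h3]
          · rw [if_neg hw, zero_mul]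
        · intro h; exact absurd (Finset.mem_univ _) h
      · rw [if_neg ha]
        show (∑ p, R a p * y p) = 0
        apply Finset.sum_eq_zero
        rintro ⟨i, b⟩ _
        have h : wd a = [] := by
          by_contra hne
          exact ha (Finset.mem_filter.mpr ⟨Finset.mem_univ _, hne⟩)
        show (if wd a = i :: wd b then (r:ℂ) else 0) * y (i, b) = 0
        rw [if_neg (by rw [h]; exact fun hc => List.cons_ne_nil _ _ hc.symm), zero_mul]
    have hψinj : Set.InjOn ψ S := by
      intro a ha b hb hab
      apply wd_inj
      rw [hψS a ha, hψS b hb, hab]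
    rw [hTx, EuclideanSpace.norm_eq]
    have hsum : ∑ a, ‖(WithLp.equiv 2 (Fin (nn d K) → ℂ)).symm (R *ᵥ y) a‖ ^ 2
        = ∑ a ∈ S, r ^ 2 * ‖y (ψ a)‖ ^ 2 := by
      rw [← Finset.sum_filter_add_sum_filter_not Finset.univ (fun a => wd a ≠ [])]
      have h2 : ∑ a ∈ Finset.univ.filter (fun a => ¬ wd a ≠ []),
          ‖(WithLp.equiv 2 (Fin (nn d K) → ℂ)).symm (R *ᵥ y) a‖ ^ 2 = 0 := by
        apply Finset.sum_eq_zero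
        intro a ha
        have : a ∉ S := by
          simp only [hS, Finset.mem_filter] at ha ⊢
          tauto
        rw [show (WithLp.equiv 2 (Fin (nn d K) → ℂ)).symm (R *ᵥ y) a = (R *ᵥ y) a from rfl,
          hcomp a, if_neg this, norm_zero]
        ring
      rw [h2, add_zero]
      apply Finset.sum_congr rfl
      intro a ha
      rw [show (WithLp.equiv 2 (Fin (nn d K) → ℂ)).symm (R *ᵥ y) a = (R *ᵥ y) a from rfl,
        hcomp a, if_pos ha, norm_mul, mul_pow, Complex.norm_real, Real.norm_eq_abs,
        abs_of_nonneg hr]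
    have himg : ∑ p ∈ S.image ψ, ‖y p‖ ^ 2 = ∑ a ∈ S, ‖y (ψ a)‖ ^ 2 :=
      Finset.sum_image (fun a ha b hb h => hψinj ha hb h)
    rw [hsum, ← Finset.mul_sum, ← himg]
    have hle : ∑ p ∈ S.image ψ, ‖y p‖ ^ 2 ≤ ∑ p, ‖y p‖ ^ 2 := by
      apply Finset.sum_le_sum_of_subset_of_nonneg (Finset.subset_univ _)
      intro p _ _
      positivity
    have hxnorm : ‖x‖ = Real.sqrt (∑ p, ‖y p‖ ^ 2) := by
      rw [EuclideanSpace.norm_eq]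
      rfl
    calc Real.sqrt (r ^ 2 * ∑ p ∈ S.image ψ, ‖y p‖ ^ 2)
        ≤ Real.sqrt (r ^ 2 * ∑ p, ‖y p‖ ^ 2) := by
          apply Real.sqrt_le_sqrt
          exact mul_le_mul_of_nonneg_left hle (by positivity)
      _ = r * ‖x‖ := by
          rw [hxnorm, Real.sqrt_mul (by positivity), Real.sqrt_sq hr]

end Stmt7


open Stmt7

/-- If q₁,…,q_N are homogeneous of pairwise distinct degrees and each has
H² norm 1, then the sup of ‖(q₁+⋯+q_N)(X)‖ over the row ball is at least √N. -/
theorem stmt7 (d N : ℕ) (q : Fin N → FreePoly d) (k : Fin N → ℕ)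
    (hhom : ∀ i, ∀ w ∈ (q i).coeff.support, FreeMonoid.length w = k i)
    (hdist : Function.Injective k)
    (hnorm : ∀ i, h2Norm (q i) = 1) :
    ENNReal.ofReal (Real.sqrt N) ≤
      ⨆ (n : ℕ) (X : Fin d → Matrix (Fin n) (Fin n) ℂ) (_ : rowNorm X < 1),
        ENNReal.ofReal (l2opNorm (freeEval X (∑ i, q i))) := by
  by_cases hN : N = 0
  · subst hN
    simp
  have hNpos : 0 < (N : ℝ) := by exact_mod_cast Nat.pos_of_ne_zero hN
  set K : ℕ := Finset.univ.sup k with hK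
  have hk : ∀ i, k i ≤ K := fun i => Finset.le_sup (Finset.mem_univ i)
  set p : FreePoly d := ∑ i, q i with hp
  have hq1 : ∀ i, ∑ w ∈ (q i).coeff.support, ‖(q i).coeff w‖ ^ 2 = 1 := by
    intro i
    have := hnorm i
    rw [h2Norm, Real.sqrt_eq_one] at this
    exact this
  have hdisj : ∀ (i j : Fin N), i ≠ j → Disjoint (q i).coeff.support (q j).coeff.support := by
    intro i j hij
    rw [Finset.disjoint_left]
    intro w hwi hwj
    exact hij (hdist ((hhom i w hwi).symm.trans (hhom j w hwj)))
  have hsupp : p.coeff.support = Finset.univ.biUnion fun i => (q i).coeff.support := by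
    rw [hp, MonoidAlgebra.coeff_sum]
    exact Finsupp.support_sum_eq_biUnion Finset.univ hdisj
  have hpval : ∀ i, ∀ u ∈ (q i).coeff.support, p.coeff u = (q i).coeff u := by
    intro i u hu
    rw [hp, MonoidAlgebra.coeff_sum, Finset.sum_apply', Finset.sum_eq_single i]
    · intro j _ hj
      by_contra hne
      exact hj (hdist ((hhom j u (Finsupp.mem_support_iff.mpr hne)).symm.trans (hhom i u hu)))
    · intro h; exact absurd (Finset.mem_univ _) h
  have hplen : ∀ u ∈ p.coeff.support, (FreeMonoid.toList u).length ≤ K := by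
    intro u hu
    rw [hsupp] at hu
    obtain ⟨i, _, hui⟩ := Finset.mem_biUnion.mp hu
    have : FreeMonoid.length u = k i := hhom i u hui
    exact le_trans (le_of_eq this) (hk i)
  -- the key bound for each radius r
  have key : ∀ r : ℝ, 0 ≤ r → r < 1 →
      ENNReal.ofReal (r ^ K * Real.sqrt N) ≤
        ⨆ (n : ℕ) (X : Fin d → Matrix (Fin n) (Fin n) ℂ) (_ : rowNorm X < 1),
          ENNReal.ofReal (l2opNorm (freeEval X (∑ i, q i))) := by
    intro r hr0 hr1
    have hrow : rowNorm (Xmat d K r) < 1 := lt_of_le_of_lt (row_bound hr0) hr1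
    have hsq : ∑ a, ‖freeEval (Xmat d K r) p a (vac d K)‖ ^ 2
        = ∑ i, (r ^ 2) ^ k i := by
      rw [sum_sq hr0 p hplen, hsupp,
        Finset.sum_biUnion (fun i _ j _ hij => hdisj i j hij)]
      apply Finset.sum_congr rfl
      intro i _
      calc ∑ u ∈ (q i).coeff.support, ‖p.coeff u‖ ^ 2 * (r ^ 2) ^ (FreeMonoid.toList u).length
          = ∑ u ∈ (q i).coeff.support, ‖(q i).coeff u‖ ^ 2 * (r ^ 2) ^ k i := by
            apply Finset.sum_congr rfl
            intro u hu
            rw [hpval i u hu, show (FreeMonoid.toList u).length = FreeMonoid.length u from rfl,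
              hhom i u hu]
        _ = (r ^ 2) ^ k i := by rw [← Finset.sum_mul, hq1 i, one_mul]
    have hge : (N : ℝ) * (r ^ 2) ^ K ≤ ∑ i, (r ^ 2) ^ k i := by
      have : ∀ i ∈ (Finset.univ : Finset (Fin N)), (r ^ 2) ^ K ≤ (r ^ 2) ^ k i := by
        intro i _
        apply pow_le_pow_of_le_one (by positivity) (by nlinarith) (hk i)
      have h2 := Finset.card_nsmul_le_sum Finset.univ (fun i => (r ^ 2) ^ k i) ((r ^ 2) ^ K) this
      simpa [nsmul_eq_mul] using h2
    have hlow : r ^ K * Real.sqrt N ≤ l2opNorm (freeEval (Xmat d K r) p) := by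
      refine le_trans ?_ (lower_bound (freeEval (Xmat d K r) p) (vac d K))
      rw [hsq]
      refine le_trans (le_of_eq ?_) (Real.sqrt_le_sqrt hge)
      rw [Real.sqrt_mul (le_of_lt hNpos), show ((r:ℝ) ^ 2) ^ K = (r ^ K) ^ 2 by ring,
        Real.sqrt_sq (by positivity)]
      ring
    calc ENNReal.ofReal (r ^ K * Real.sqrt N)
        ≤ ENNReal.ofReal (l2opNorm (freeEval (Xmat d K r) (∑ i, q i))) := by
          exact ENNReal.ofReal_le_ofReal (by rw [← hp]; exact hlow)
      _ ≤ _ := by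
          refine le_iSup_of_le (nn d K) ?_
          refine le_iSup_of_le (Xmat d K r) ?_
          exact le_iSup_of_le hrow le_rfl
  -- pass to the limit r → 1
  apply le_of_forall_lt
  intro c hc
  have hctop : c ≠ ⊤ := hc.ne_top
  have hs : 0 < Real.sqrt N := Real.sqrt_pos.mpr hNpos
  have hcs : c.toReal < Real.sqrt N := ENNReal.toReal_lt_of_lt_ofReal hc
  set b' : ℝ := max (c.toReal / Real.sqrt N) 0 with hb'
  have hb'0 : 0 ≤ b' := le_max_right _ _
  have hb'1 : b' < 1 := max_lt ((div_lt_one hs).mpr hcs) one_pos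
  set ε : ℝ := (1 - b') / (K + 1) with hε
  have hKpos : (0 : ℝ) < K + 1 := by positivity
  have hε0 : 0 < ε := div_pos (by linarith) hKpos
  have hε1 : ε ≤ 1 := by
    rw [hε, div_le_one hKpos]
    have : (0 : ℝ) ≤ K := Nat.cast_nonneg K
    linarith
  set r : ℝ := 1 - ε with hr
  have hr0 : 0 ≤ r := by linarith
  have hr1 : r < 1 := by linarith
  have hbern : 1 - (K : ℝ) * ε ≤ r ^ K := by
    have := one_add_mul_le_pow (a := -ε) (by linarith) K
    calc (1 : ℝ) - K * ε = 1 + K * (-ε) := by ring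
      _ ≤ (1 + -ε) ^ K := this
      _ = r ^ K := by rw [hr]; ring_nf
  have hKε : (K : ℝ) * ε < 1 - b' := by
    rw [hε, mul_div_assoc']
    rw [div_lt_iff₀ hKpos]
    nlinarith [Nat.cast_nonneg (α := ℝ) K]
  have hrK : b' < r ^ K := by linarith
  have hlt : c.toReal < r ^ K * Real.sqrt N := by
    have h1 : c.toReal ≤ b' * Real.sqrt N := by
      have := le_max_left (c.toReal / Real.sqrt N) 0
      calc c.toReal = (c.toReal / Real.sqrt N) * Real.sqrt N := by
            field_simp
        _ ≤ b' * Real.sqrt N := mul_le_mul_of_nonneg_right this (le_of_lt hs)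
    calc c.toReal ≤ b' * Real.sqrt N := h1
      _ < r ^ K * Real.sqrt N := by exact mul_lt_mul_of_pos_right hrK hs
  calc c = ENNReal.ofReal c.toReal := (ENNReal.ofReal_toReal hctop).symm
    _ < ENNReal.ofReal (r ^ K * Real.sqrt N) := by
        rw [ENNReal.ofReal_lt_ofReal_iff (lt_of_le_of_lt ENNReal.toReal_nonneg hlt)]
        exact hlt
    _ ≤ _ := key r hr0 hr1
end

section
/- Let d ≥ 2. For each n ≥ 1, let p_n be a free polynomial in d variables, homogeneous of degree e_n ≥ 1, such that sup { ‖p_n(X)‖ : X ∈ C^d } ≤ 1. For k ≥ 1 define q_k = ∏_{n≥1} p_n^{⌊k/(2^n e_n)⌋} (a finite product, since the exponent is 0 once 2^n > k). Fix r ≥ 1 and m ≥ 1, set D = 2^m e_m, and let X be a d-tuple of square complex matrices (of any size) such that the block row matrix [X₁ … X_d] has norm at most r and ‖p_m(X)‖ ≤ (2r)^{-D}. Then for every k ≥ 1, ‖q_k(X)‖ ≤ r^D · 2^{D-k}. In particular Σ_{k≥1} ‖q_k(X)‖ ≤ r^D · 2^D. -/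
open scoped Matrix.Norms.L2Operator

lemma l2opNorm_eq {m n : Type*} [Fintype m] [Fintype n] [DecidableEq n] (A : Matrix m n ℂ) : l2opNorm A = ‖A‖ := rfl

lemma l2opNorm_nonneg {m n : Type*} [Fintype m] [Fintype n] [DecidableEq n] (A : Matrix m n ℂ) : 0 ≤ l2opNorm A :=
  norm_nonneg _

lemma rowNorm_nonneg {d n : ℕ} (X : Fin d → Matrix (Fin n) (Fin n) ℂ) : 0 ≤ rowNorm X :=
  norm_nonneg _

lemma l2opNorm_one_le {n : ℕ} : l2opNorm (1 : Matrix (Fin n) (Fin n) ℂ) ≤ 1 := by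
  rw [l2opNorm_eq]
  have h : ‖(1 : Matrix (Fin n) (Fin n) ℂ)‖ = ‖(Matrix.toEuclideanCLM (𝕜 := ℂ) (1 : Matrix (Fin n) (Fin n) ℂ))‖ := rfl
  rw [h, map_one]
  exact ContinuousLinearMap.norm_id_le

lemma lift_smul {d n : ℕ} (c : ℂ) (X : Fin d → Matrix (Fin n) (Fin n) ℂ) (w : FreeMonoid (Fin d)) :
    FreeMonoid.lift (c • X) w = c ^ (FreeMonoid.length w) • FreeMonoid.lift X w := by
  induction w using FreeMonoid.recOn with
  | one => simp
  | of_mul x xs ih =>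
      rw [map_mul, map_mul, ih, FreeMonoid.length_mul, FreeMonoid.length_of]
      simp only [FreeMonoid.lift_eval_of, Pi.smul_apply]
      rw [smul_mul_smul_comm, ← pow_succ']
      ring_nf

lemma freeEval_homog_smul {d n : ℕ} (c : ℂ) (X : Fin d → Matrix (Fin n) (Fin n) ℂ)
    (q : FreePoly d) (e : ℕ) (h : ∀ w ∈ q.coeff.support, FreeMonoid.length w = e) :
    freeEval (c • X) q = c ^ e • freeEval X q := by
  show MonoidAlgebra.lift ℂ _ (FreeMonoid (Fin d)) (FreeMonoid.lift (c • X)) q = _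
  rw [MonoidAlgebra.lift_apply]
  have : freeEval X q = MonoidAlgebra.lift ℂ _ (FreeMonoid (Fin d)) (FreeMonoid.lift X) q := rfl
  rw [this, MonoidAlgebra.lift_apply, Finsupp.smul_sum]
  refine Finsupp.sum_congr ?_
  intro w hw
  rw [lift_smul, h w hw, smul_comm]

lemma rowNorm_smul {d n : ℕ} (c : ℂ) (X : Fin d → Matrix (Fin n) (Fin n) ℂ) :
    rowNorm (c • X) = ‖c‖ * rowNorm X := by
  have h : (Matrix.of fun (i : Fin n) (p : Fin d × Fin n) => (c • X) p.1 i p.2)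
      = c • (Matrix.of fun (i : Fin n) (p : Fin d × Fin n) => X p.1 i p.2) := by
    ext i q; simp
  rw [rowNorm, h, l2opNorm_eq, norm_smul, rowNorm, l2opNorm_eq]

lemma eval_le_pow {d N : ℕ} (q : FreePoly d) (e : ℕ)
    (hq : ∀ w ∈ q.coeff.support, FreeMonoid.length w = e)
    (hbd : ∀ (n : ℕ) (Y : Fin d → Matrix (Fin n) (Fin n) ℂ),
        rowNorm Y < 1 → l2opNorm (freeEval Y q) ≤ 1)
    (r : ℝ) (hr : 0 < r) (X : Fin d → Matrix (Fin N) (Fin N) ℂ) (hX : rowNorm X ≤ r) :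
    l2opNorm (freeEval X q) ≤ r ^ e := by
  have key : ∀ s : ℝ, r < s → l2opNorm (freeEval X q) ≤ s ^ e := by
    intro s hs
    have hs0 : (0:ℝ) < s := hr.trans hs
    have h1 : rowNorm (((s : ℂ)⁻¹) • X) < 1 := by
      rw [rowNorm_smul, norm_inv, Complex.norm_real, Real.norm_eq_abs, abs_of_pos hs0, inv_mul_eq_div, div_lt_one hs0]
      exact lt_of_le_of_lt hX hs
    have h2 := hbd N _ h1
    rw [freeEval_homog_smul _ _ _ e hq, l2opNorm_eq, norm_smul, norm_pow, norm_inv,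
      Complex.norm_real, Real.norm_eq_abs, abs_of_pos hs0, inv_pow] at h2
    rw [l2opNorm_eq]
    calc ‖freeEval X q‖ = (s ^ e) * ((s ^ e)⁻¹ * ‖freeEval X q‖) := by
          field_simp
      _ ≤ (s ^ e) * 1 := by
          exact mul_le_mul_of_nonneg_left h2 (by positivity)
      _ = s ^ e := mul_one _
  refine ge_of_tendsto (f := fun s => s ^ e) (x := nhdsWithin r (Set.Ioi r)) ?_ ?_
  · exact ((continuous_pow e).tendsto r).mono_left nhdsWithin_le_nhds
  · exact eventually_nhdsWithin_of_forall fun s hs => key s hs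

lemma norm_prod_range_le {N : ℕ} (k : ℕ) (f : ℕ → Matrix (Fin N) (Fin N) ℂ) (g : ℕ → ℝ)
    (h : ∀ i, i < k → l2opNorm (f i) ≤ g i) (hg : ∀ i, 0 ≤ g i) :
    l2opNorm ((List.range k).map f).prod ≤ ∏ i ∈ Finset.range k, g i := by
  induction k with
  | zero => simpa using l2opNorm_one_le
  | succ n ih =>
      rw [List.range_succ, List.map_append, List.prod_append, Finset.prod_range_succ]
      simp only [List.map_cons, List.map_nil, List.prod_cons, List.prod_nil, mul_one]
      rw [l2opNorm_eq]
      calc ‖((List.range n).map f).prod * f n‖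
          ≤ ‖((List.range n).map f).prod‖ * ‖f n‖ := norm_mul_le _ _
        _ ≤ (∏ i ∈ Finset.range n, g i) * g n := by
            refine mul_le_mul ?_ ?_ (norm_nonneg _) (Finset.prod_nonneg fun i _ => hg i)
            · rw [← l2opNorm_eq]; exact ih (fun i hi => h i (by omega))
            · rw [← l2opNorm_eq]; exact h n (by omega)

lemma l2opNorm_pow_le {N : ℕ} (A : Matrix (Fin N) (Fin N) ℂ) (n : ℕ) :
    l2opNorm (A ^ n) ≤ l2opNorm A ^ n := by
  cases n with
  | zero => simpa using l2opNorm_one_le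
  | succ n =>
      rw [l2opNorm_eq, l2opNorm_eq]
      exact norm_pow_le' A (Nat.succ_pos n)

lemma geom_sum_inv_le (k : ℕ) : (∑ i ∈ Finset.range k, ((2:ℝ)⁻¹) ^ (i+1)) ≤ 1 := by
  have h : (∑ i ∈ Finset.range k, ((2:ℝ)⁻¹) ^ (i+1)) = 1 - (2⁻¹:ℝ) ^ k := by
    induction k with
    | zero => simp
    | succ n ih => rw [Finset.sum_range_succ, ih]; ring
  rw [h]
  have : (0:ℝ) ≤ (2⁻¹:ℝ) ^ k := by positivity
  linarith

lemma geom_floor_sum_le (e : ℕ → ℕ) (k : ℕ) :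
    (∑ i ∈ Finset.range k, e (i+1) * (k / (2 ^ (i+1) * e (i+1)))) ≤ k := by
  have h1 : ∀ i, e (i+1) * (k / (2 ^ (i+1) * e (i+1))) ≤ k / 2 ^ (i+1) := by
    intro i
    rw [← Nat.div_div_eq_div_mul, mul_comm]
    exact Nat.div_mul_le_self _ _
  have h2 : (∑ i ∈ Finset.range k, e (i+1) * (k / (2 ^ (i+1) * e (i+1)))) ≤
      ∑ i ∈ Finset.range k, k / 2 ^ (i+1) :=
    Finset.sum_le_sum fun i _ => h1 i
  refine h2.trans ?_
  have hc : ((∑ i ∈ Finset.range k, k / 2 ^ (i+1) : ℕ) : ℝ) ≤ (k : ℝ) := by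
    rw [Nat.cast_sum]
    calc ∑ i ∈ Finset.range k, ((k / 2 ^ (i+1) : ℕ) : ℝ)
        ≤ ∑ i ∈ Finset.range k, (k:ℝ) * (2⁻¹) ^ (i+1) := by
          refine Finset.sum_le_sum fun i _ => ?_
          refine (Nat.cast_div_le).trans ?_
          rw [div_eq_mul_inv]
          push_cast
          rw [← inv_pow]
      _ = (k:ℝ) * ∑ i ∈ Finset.range k, (2⁻¹:ℝ) ^ (i+1) := (Finset.mul_sum _ _ _).symm
      _ ≤ (k:ℝ) * 1 := mul_le_mul_of_nonneg_left (geom_sum_inv_le k) (Nat.cast_nonneg k)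
      _ = (k:ℝ) := mul_one _
  exact_mod_cast hc


/-- q_k = ∏_{n≥1} p_n^{⌊k/(2^n e_n)⌋}, written as the (ordered) product over n = 1,…,k;
this is the full product since the exponent vanishes once 2^n > k, in particular for
all n > k. -/
noncomputable def qProd {d : ℕ} (p : ℕ → FreePoly d) (e : ℕ → ℕ) (k : ℕ) : FreePoly d :=
  ((List.range k).map (fun i => p (i + 1) ^ (k / (2 ^ (i + 1) * e (i + 1))))).prod

/-- the key estimate.  If each p_n is homogeneous of degree e_n ≥ 1 with
sup norm ≤ 1 on the row ball, r ≥ 1, m ≥ 1, D = 2^m e_m, X has row norm ≤ r and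
‖p_m(X)‖ ≤ (2r)^{-D}, then ‖q_k(X)‖ ≤ r^D 2^{D-k} for all k ≥ 1, and
Σ_{k ≥ 1} ‖q_k(X)‖ ≤ r^D 2^D. -/
theorem stmt9 (d : ℕ) (hd : 2 ≤ d) (p : ℕ → FreePoly d) (e : ℕ → ℕ)
    (he : ∀ n, 1 ≤ e n)
    (hhom : ∀ n, ∀ w ∈ (p n).coeff.support, FreeMonoid.length w = e n)
    (hbd : ∀ (n N : ℕ) (Y : Fin d → Matrix (Fin N) (Fin N) ℂ),
        rowNorm Y < 1 → l2opNorm (freeEval Y (p n)) ≤ 1)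
    (r : ℝ) (hr : 1 ≤ r) (m : ℕ) (hm : 1 ≤ m)
    (N : ℕ) (X : Fin d → Matrix (Fin N) (Fin N) ℂ) (hX : rowNorm X ≤ r)
    (hpm : l2opNorm (freeEval X (p m)) ≤ ((2 * r) ^ (2 ^ m * e m))⁻¹) :
    (∀ k : ℕ, 1 ≤ k →
        l2opNorm (freeEval X (qProd p e k)) ≤
          r ^ (2 ^ m * e m) * (2 : ℝ) ^ ((2 ^ m * e m : ℤ) - (k : ℤ))) ∧
      ∑' k : ℕ, l2opNorm (freeEval X (qProd p e (k + 1))) ≤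
        r ^ (2 ^ m * e m) * 2 ^ (2 ^ m * e m) := by
  have hr0 : (0:ℝ) < r := lt_of_lt_of_le one_pos hr
  set D := 2 ^ m * e m with hD
  have hD1 : 1 ≤ D := Nat.mul_pos (Nat.pow_pos (n := m) (by norm_num : 0 < 2)) (he m)
  have hB : ∀ n, l2opNorm (freeEval X (p n)) ≤ r ^ (e n) := fun n =>
    eval_le_pow (p n) (e n) (hhom n) (fun N' Y hY => hbd n N' Y hY) r hr0 X hX
  have H1 : ∀ k : ℕ, 1 ≤ k → l2opNorm (freeEval X (qProd p e k)) ≤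
      r ^ D * (2:ℝ) ^ ((D:ℤ) - (k:ℤ)) := by
    intro k hk
    have e1 : freeEval X (qProd p e k) =
        ((List.range k).map
          (fun i => freeEval X (p (i+1)) ^ (k / (2 ^ (i+1) * e (i+1))))).prod := by
      rw [qProd, map_list_prod, List.map_map]
      exact congrArg List.prod (List.map_congr_left fun i _ => by simp [Function.comp, map_pow])
    set a : ℕ → ℕ := fun n => k / (2 ^ n * e n) with ha
    have hSk : (∑ i ∈ Finset.range k, e (i+1) * a (i+1)) ≤ k := geom_floor_sum_le e k
    by_cases hcase : k ≤ D
    · have hstep : l2opNorm (freeEval X (qProd p e k)) ≤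
          ∏ i ∈ Finset.range k, r ^ (e (i+1) * a (i+1)) := by
        rw [e1]
        refine norm_prod_range_le k _ _ (fun i hi => ?_) (fun i => by positivity)
        calc l2opNorm (freeEval X (p (i+1)) ^ a (i+1))
            ≤ l2opNorm (freeEval X (p (i+1))) ^ a (i+1) := l2opNorm_pow_le _ _
          _ ≤ (r ^ e (i+1)) ^ a (i+1) :=
              pow_le_pow_left₀ (l2opNorm_nonneg _) (hB (i+1)) _
          _ = r ^ (e (i+1) * a (i+1)) := (pow_mul r _ _).symm
      refine hstep.trans ?_
      rw [Finset.prod_pow_eq_pow_sum]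
      have h3 : r ^ (∑ i ∈ Finset.range k, e (i+1) * a (i+1)) ≤ r ^ D :=
        pow_le_pow_right₀ hr (le_trans hSk hcase)
      refine h3.trans ?_
      nth_rewrite 1 [← mul_one (r ^ D)]
      refine mul_le_mul_of_nonneg_left ?_ (by positivity)
      exact one_le_zpow₀ one_le_two (by omega)
    · push_neg at hcase
      have hmk : m - 1 < k := by
        have : m < 2 ^ m := Nat.lt_two_pow_self
        have : m < D := lt_of_lt_of_le this (Nat.le_mul_of_pos_right _ (he m))
        omega
      set g : ℕ → ℝ := fun i =>
        if i = m - 1 then (((2*r) ^ D)⁻¹) ^ (a m) else r ^ (e (i+1) * a (i+1)) with hg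
      have hgnn : ∀ i, 0 ≤ g i := by
        intro i; rw [hg]; dsimp only; split <;> positivity
      have hstep : l2opNorm (freeEval X (qProd p e k)) ≤ ∏ i ∈ Finset.range k, g i := by
        rw [e1]
        refine norm_prod_range_le k _ _ (fun i hi => ?_) hgnn
        rw [hg]; dsimp only
        split
        · next him =>
            have him' : i + 1 = m := by omega
            calc l2opNorm (freeEval X (p (i+1)) ^ a (i+1))
                ≤ l2opNorm (freeEval X (p (i+1))) ^ a (i+1) := l2opNorm_pow_le _ _
              _ ≤ (((2*r) ^ D)⁻¹) ^ (a m) := by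
                  rw [him']
                  exact pow_le_pow_left₀ (l2opNorm_nonneg _) hpm _
        · next him =>
            calc l2opNorm (freeEval X (p (i+1)) ^ a (i+1))
                ≤ l2opNorm (freeEval X (p (i+1))) ^ a (i+1) := l2opNorm_pow_le _ _
              _ ≤ (r ^ e (i+1)) ^ a (i+1) :=
                  pow_le_pow_left₀ (l2opNorm_nonneg _) (hB (i+1)) _
              _ = r ^ (e (i+1) * a (i+1)) := (pow_mul r _ _).symm
      have hprod : ∏ i ∈ Finset.range k, g i
          = (((2*r) ^ D)⁻¹) ^ (a m) *
            ∏ i ∈ (Finset.range k).erase (m-1), r ^ (e (i+1) * a (i+1)) := by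
        rw [← Finset.mul_prod_erase _ g (Finset.mem_range.mpr hmk)]
        congr 1
        · rw [hg]; simp
        · refine Finset.prod_congr rfl fun i hi => ?_
          rw [hg]; dsimp only
          rw [if_neg (Finset.ne_of_mem_erase hi)]
      set S' := ∑ i ∈ (Finset.range k).erase (m-1), e (i+1) * a (i+1) with hS'
      have hS'k : S' ≤ k :=
        le_trans (Finset.sum_le_sum_of_subset (Finset.erase_subset _ _)) hSk
      have hkD : k ≤ D * (a m) + D := by
        have h4 := Nat.lt_mul_div_succ k (show 0 < D by omega)
        have h5 : a m = k / D := rfl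
        rw [h5, Nat.mul_succ] at *
        omega
      refine hstep.trans ?_
      rw [hprod, Finset.prod_pow_eq_pow_sum, ← hS']
      -- numeric step
      have h2r : (0:ℝ) < 2 * r := by linarith
      have lhs_eq : (((2*r:ℝ) ^ D)⁻¹) ^ (a m) * r ^ S'
          = (2:ℝ) ^ (-(D * a m : ℤ)) * r ^ ((S':ℤ) - (D * a m : ℤ)) := by
        have hrne : r ≠ 0 := ne_of_gt hr0
        rw [inv_pow, ← pow_mul, ← zpow_natCast (2*r:ℝ) (D * a m), ← zpow_neg, mul_zpow,
          ← zpow_natCast r S', sub_eq_add_neg, zpow_add₀ hrne]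
        push_cast
        ring
      rw [lhs_eq]
      have hZ1 : (-(D * a m : ℤ)) ≤ (D:ℤ) - (k:ℤ) := by
        have : (k:ℤ) ≤ (D:ℤ) * (a m : ℤ) + (D:ℤ) := by exact_mod_cast hkD
        push_cast
        linarith
      have hZ2 : ((S':ℤ) - (D * a m : ℤ)) ≤ (D:ℤ) := by
        have h6 : (k:ℤ) ≤ (D:ℤ) * (a m : ℤ) + (D:ℤ) := by exact_mod_cast hkD
        have h7 : (S':ℤ) ≤ (k:ℤ) := by exact_mod_cast hS'k
        push_cast
        linarith
      calc (2:ℝ) ^ (-(D * a m : ℤ)) * r ^ ((S':ℤ) - (D * a m : ℤ))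
          ≤ (2:ℝ) ^ ((D:ℤ) - (k:ℤ)) * r ^ ((D:ℤ)) := by
            refine mul_le_mul (zpow_le_zpow_right₀ one_le_two hZ1)
              (zpow_le_zpow_right₀ hr hZ2) (zpow_nonneg (by linarith) _)
              (zpow_nonneg (by norm_num) _)
        _ = r ^ D * (2:ℝ) ^ ((D:ℤ) - (k:ℤ)) := by
            rw [zpow_natCast, mul_comm]
  have hDZ : ((D:ℕ):ℤ) = 2 ^ m * (e m : ℤ) := by rw [hD]; push_cast; ring
  refine ⟨fun k hk => ?_, ?_⟩
  · rw [← hDZ]; exact H1 k hk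
  -- part 2
  set C : ℝ := r ^ D * (2:ℝ) ^ ((D:ℤ) - 1) with hC
  have hterm : ∀ k : ℕ, l2opNorm (freeEval X (qProd p e (k+1))) ≤ C * (2⁻¹:ℝ) ^ k := by
    intro k
    refine (H1 (k+1) (by omega)).trans_eq ?_
    rw [hC, mul_assoc]
    congr 1
    have h8 : ((D:ℤ) - ((k+1:ℕ):ℤ)) = ((D:ℤ) - 1) + (-(k:ℤ)) := by push_cast; ring
    rw [h8, zpow_add₀ (by norm_num : (2:ℝ) ≠ 0), zpow_neg, zpow_natCast, inv_pow]
  have hgeo : Summable fun k : ℕ => C * (2⁻¹:ℝ) ^ k :=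
    (summable_geometric_of_lt_one (by norm_num) (by norm_num)).mul_left C
  have hlhs : Summable fun k : ℕ => l2opNorm (freeEval X (qProd p e (k+1))) :=
    Summable.of_nonneg_of_le (fun k => l2opNorm_nonneg _) hterm hgeo
  calc ∑' k : ℕ, l2opNorm (freeEval X (qProd p e (k+1)))
      ≤ ∑' k : ℕ, C * (2⁻¹:ℝ) ^ k := Summable.tsum_le_tsum hterm hlhs hgeo
    _ = C * (1 - 2⁻¹)⁻¹ := by
        rw [tsum_mul_left, tsum_geometric_of_lt_one (by norm_num) (by norm_num)]
    _ = r ^ D * 2 ^ D := by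
        rw [hC, show ((1:ℝ) - 2⁻¹)⁻¹ = 2 by norm_num, mul_assoc]
        congr 1
        have h9 : (2:ℝ) ^ ((D:ℤ) - 1) * 2 = 2 ^ (D:ℕ) := by
          have h10 : (2:ℝ) ^ ((D:ℤ) - 1) * 2 = 2 ^ (((D:ℤ) - 1) + 1) := by
            rw [zpow_add₀ (two_ne_zero : (2:ℝ) ≠ 0), zpow_one]
          rw [h10, sub_add_cancel, zpow_natCast]
        exact h9
end

section
/- For each n ≥ 1, let p_n be a free polynomial in d variables, homogeneous of degree e_n ≥ 1, such that p_n(X) = 0 for every d-tuple X of n×n complex matrices. For k ≥ 1 define q_k = ∏_{n≥1} p_n^{⌊k/(2^n e_n)⌋} (a finite product, since the exponent is 0 once 2^n > k). Then for every m ≥ 1, every d-tuple X of m×m complex matrices, and every k ≥ 2^m e_m, one has q_k(X) = 0. Consequently, for each fixed tuple X the series Σ_{k≥1} q_k(X) has only finitely many nonzero terms. -/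
/-- if each p_n (homogeneous of degree e_n ≥ 1) vanishes on all d-tuples of
n×n matrices, then q_k vanishes on all d-tuples of m×m matrices as soon as k ≥ 2^m e_m;
consequently for fixed X only finitely many q_k(X) are nonzero. -/
theorem stmt10 (d : ℕ) (p : ℕ → FreePoly d) (e : ℕ → ℕ) (he : ∀ n, 1 ≤ e n)
    (hhom : ∀ n, ∀ w ∈ (p n).coeff.support, FreeMonoid.length w = e n)
    (hvan : ∀ n, 1 ≤ n → ∀ X : Fin d → Matrix (Fin n) (Fin n) ℂ, freeEval X (p n) = 0)
    (m : ℕ) (hm : 1 ≤ m) (X : Fin d → Matrix (Fin m) (Fin m) ℂ) :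
    (∀ k : ℕ, 2 ^ m * e m ≤ k → freeEval X (qProd p e k) = 0) ∧
      {k : ℕ | 1 ≤ k ∧ freeEval X (qProd p e k) ≠ 0}.Finite := by
  have main : ∀ k : ℕ, 2 ^ m * e m ≤ k → freeEval X (qProd p e k) = 0 := by
    intro k hk
    have hmk : m ≤ k := le_trans (le_trans (Nat.lt_two_pow_self (n := m)).le
      (Nat.le_mul_of_pos_right _ (he m))) hk
    have hm1 : m - 1 < k := lt_of_lt_of_le (Nat.sub_lt hm one_pos) hmk
    have hms : m - 1 + 1 = m := Nat.succ_pred_eq_of_pos hm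
    have hexp : 1 ≤ k / (2 ^ m * e m) := Nat.one_le_div_iff
      (Nat.mul_pos (Nat.pow_pos (n := m) two_pos) (he m)) |>.mpr hk
    rw [qProd, map_list_prod]
    apply List.prod_eq_zero
    simp only [List.map_map, List.mem_map, List.mem_range, Function.comp_apply]
    refine ⟨m - 1, hm1, ?_⟩
    rw [hms, map_pow, hvan m hm X, zero_pow (Nat.one_le_iff_ne_zero.mp hexp)]
  refine ⟨main, Set.Finite.subset (Set.finite_Iio (2 ^ m * e m)) ?_⟩
  intro k hk
  by_contra h
  exact hk.2 (main k (le_of_not_gt h))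
end

section
/- Let d ≥ 2. There exists a sequence (q_k)_{k≥1} of free polynomials in d variables such that: each q_k is homogeneous of degree at most k; ‖q_k‖_{H²} = 1 for every k; and for every m ≥ 1 there exists K such that for all k ≥ K, q_k(X) = 0 for every d-tuple X of m×m complex matrices. -/
open Equiv

private def blkL {α : Type*} (a b : α) (N i : ℕ) : List α :=
  List.replicate i a ++ List.replicate (N - i) b

private lemma blkL_length {α : Type*} (a b : α) {N i : ℕ} (h : i ≤ N) :
    (blkL a b N i).length = N := by
  simp [blkL, Nat.add_sub_cancel' h]

private lemma blkL_inj {α : Type*} [DecidableEq α] {a b : α} (hab : a ≠ b) {N i j : ℕ}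
    (h : blkL a b N i = blkL a b N j) : i = j := by
  have := congrArg (List.count a) h
  simpa [blkL, List.count_replicate, Ne.symm hab] using this

private lemma flatten_inj {α : Type*} {N : ℕ} : ∀ (L1 L2 : List (List α)),
    (∀ l ∈ L1, l.length = N) → (∀ l ∈ L2, l.length = N) → L1.length = L2.length →
    L1.flatten = L2.flatten → L1 = L2 := by
  intro L1
  induction L1 with
  | nil => intro L2 _ _ hl _; cases L2 <;> simp_all
  | cons h t ih =>
    intro L2 h1 h2 hl hf
    cases L2 with
    | nil => simp at hl
    | cons h' t' =>
      simp only [List.flatten_cons] at hf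
      have hlen : h.length = h'.length := by
        rw [h1 h (by simp), h2 h' (by simp)]
      obtain ⟨e1, e2⟩ := List.append_inj hf hlen
      have := ih t' (fun l hl => h1 l (by simp [hl])) (fun l hl => h2 l (by simp [hl]))
        (by simpa using hl) e2
      simp [e1, this]

private def wrdw {d : ℕ} (a b : Fin d) (N : ℕ) (σ : Perm (Fin N)) :
    FreeMonoid (Fin d) :=
  FreeMonoid.ofList ((List.ofFn fun i => blkL a b N (σ i : ℕ)).flatten)

private lemma wrdw_inj {d : ℕ} {a b : Fin d} (hab : a ≠ b) {N : ℕ} :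
    Function.Injective (wrdw a b N) := by
  intro σ τ h
  have h2 : (List.ofFn fun i => blkL a b N ((σ i : ℕ))).flatten
      = (List.ofFn fun i => blkL a b N ((τ i : ℕ))).flatten :=
    FreeMonoid.ofList.injective h
  have h3 := flatten_inj (N := N) _ _
    (by intro l hl; simp only [List.mem_ofFn] at hl
        obtain ⟨i, rfl⟩ := hl; exact blkL_length a b (σ i).isLt.le)
    (by intro l hl; simp only [List.mem_ofFn] at hl
        obtain ⟨i, rfl⟩ := hl; exact blkL_length a b (τ i).isLt.le)
    (by simp) h2
  ext i
  have := congrFun (List.ofFn_inj.mp h3) i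
  exact blkL_inj hab this

private lemma wrdw_length {d : ℕ} (a b : Fin d) (N : ℕ) (σ : Perm (Fin N)) :
    FreeMonoid.length (wrdw a b N σ) = N * N := by
  show ((List.ofFn fun i => blkL a b N ((σ i : ℕ))).flatten).length = N * N
  rw [List.length_flatten]
  rw [List.map_ofFn]
  have : ∀ i : Fin N, (blkL a b N ((σ i : ℕ))).length = N :=
    fun i => blkL_length a b (σ i).isLt.le
  simp only [Function.comp_def, this]
  simp [Finset.sum_const, mul_comm]

private noncomputable def stdP (d : ℕ) (a b : Fin d) (N : ℕ) : FreePoly d :=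
  ∑ σ : Perm (Fin N), MonoidAlgebra.single (wrdw a b N σ) ((Perm.sign σ : ℤ) : ℂ)

private lemma stdP_apply {d : ℕ} {a b : Fin d} (hab : a ≠ b) (N : ℕ) (τ : Perm (Fin N)) :
    (stdP d a b N).coeff (wrdw a b N τ) = ((Perm.sign τ : ℤ) : ℂ) := by
  classical
  rw [stdP, MonoidAlgebra.coeff_sum, Finsupp.finset_sum_apply]
  rw [Finset.sum_eq_single τ]
  · simp [MonoidAlgebra.coeff_single, Finsupp.single_apply]
  · intro σ _ hστ
    rw [MonoidAlgebra.coeff_single, Finsupp.single_apply, if_neg]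
    exact fun h => hστ (wrdw_inj hab h)
  · simp

private lemma stdP_support {d : ℕ} (a b : Fin d) (N : ℕ) {w : FreeMonoid (Fin d)}
    (hw : w ∈ (stdP d a b N).coeff.support) : ∃ σ : Perm (Fin N), w = wrdw a b N σ := by
  classical
  rw [stdP, MonoidAlgebra.coeff_sum] at hw
  obtain ⟨σ, _, hw⟩ := Finsupp.mem_support_finset_sum w hw
  rw [MonoidAlgebra.coeff_single] at hw
  have := Finsupp.support_single_subset hw
  simp only [Finset.mem_singleton] at this
  exact ⟨σ, this⟩

private lemma freeEval_stdP {d m : ℕ} (a b : Fin d) (N : ℕ)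
    (X : Fin d → Matrix (Fin m) (Fin m) ℂ) :
    freeEval X (stdP d a b N) =
      MultilinearMap.alternatization
        (MultilinearMap.mkPiAlgebraFin ℂ N (Matrix (Fin m) (Fin m) ℂ))
        (fun j : Fin N => ((blkL a b N (j : ℕ)).map X).prod) := by
  rw [stdP, map_sum, MultilinearMap.alternatization_apply]
  refine Finset.sum_congr rfl fun σ _ => ?_
  have h1 : freeEval X (MonoidAlgebra.single (wrdw a b N σ) ((Perm.sign σ : ℤ) : ℂ))
      = ((Perm.sign σ : ℤ) : ℂ) • FreeMonoid.lift X (wrdw a b N σ) := by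
    simp [freeEval, MonoidAlgebra.lift_single]
  have h2 : FreeMonoid.lift X (wrdw a b N σ)
      = (List.ofFn fun i => ((blkL a b N ((σ i : ℕ))).map X).prod).prod := by
    rw [FreeMonoid.lift_apply, wrdw]
    rw [FreeMonoid.toList_ofList, List.map_flatten, List.prod_flatten, List.map_ofFn,
      List.map_ofFn]
    rfl
  rw [h1, h2, MultilinearMap.domDomCongr_apply, MultilinearMap.mkPiAlgebraFin_apply,
    Int.cast_smul_eq_zsmul, Units.smul_def]


/-- for d ≥ 2 there is a sequence (q_k)_{k≥1} of free polynomials, each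
homogeneous of degree at most k with H² norm 1, such that for every matrix size m the
evaluations q_k(X) on m×m tuples vanish for all large k. -/
theorem stmt11 (d : ℕ) (hd : 2 ≤ d) :
    ∃ q : ℕ → FreePoly d,
      (∀ k, 1 ≤ k → ∃ j ≤ k, ∀ w ∈ (q k).coeff.support, FreeMonoid.length w = j) ∧
      (∀ k, 1 ≤ k → h2Norm (q k) = 1) ∧
      (∀ m : ℕ, 1 ≤ m → ∃ K : ℕ, ∀ k, K ≤ k →
        ∀ X : Fin d → Matrix (Fin m) (Fin m) ℂ, freeEval X (q k) = 0) := by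
  classical
  set a : Fin d := ⟨0, by omega⟩ with ha
  set b : Fin d := ⟨1, by omega⟩ with hb
  have hab : a ≠ b := by simp [ha, hb, Fin.ext_iff]
  refine ⟨fun k => (((Real.sqrt (Nat.sqrt k).factorial : ℝ)) : ℂ)⁻¹ • stdP d a b (Nat.sqrt k),
    ?_, ?_, ?_⟩
  · intro k _
    refine ⟨Nat.sqrt k * Nat.sqrt k, Nat.sqrt_le k, fun w hw => ?_⟩
    have hw' : w ∈ (stdP d a b (Nat.sqrt k)).coeff.support := Finsupp.support_smul hw
    obtain ⟨σ, rfl⟩ := stdP_support a b (Nat.sqrt k) hw'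
    exact wrdw_length a b _ σ
  · intro k _
    set N := Nat.sqrt k
    have hfac : (0:ℝ) < N.factorial := by exact_mod_cast N.factorial_pos
    have hs : (0:ℝ) < Real.sqrt N.factorial := Real.sqrt_pos.2 hfac
    set c : ℂ := ((Real.sqrt N.factorial : ℝ) : ℂ)⁻¹ with hc
    have hc0 : c ≠ 0 := by
      simp only [hc, ne_eq, inv_eq_zero, Complex.ofReal_eq_zero]
      exact hs.ne'
    have hnorm : ∀ σ : Perm (Fin N), ‖(c • stdP d a b N).coeff (wrdw a b N σ)‖ ^ 2
        = (N.factorial : ℝ)⁻¹ := by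
      intro σ
      rw [MonoidAlgebra.coeff_smul_apply, stdP_apply hab, smul_eq_mul, norm_mul]
      have h1 : ‖((Perm.sign σ : ℤ) : ℂ)‖ = 1 := by
        rcases Int.units_eq_one_or (Perm.sign σ) with h | h <;> simp [h]
      rw [h1, mul_one, hc, norm_inv, Complex.norm_real, Real.norm_eq_abs,
        abs_of_pos hs]
      rw [inv_pow, Real.sq_sqrt hfac.le]
    have hsum : ∑ w ∈ (c • stdP d a b N).coeff.support, ‖(c • stdP d a b N).coeff w‖ ^ 2 = 1 := by
      have hsub : (c • stdP d a b N).coeff.support ⊆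
          Finset.image (wrdw a b N) Finset.univ := by
        intro w hw
        obtain ⟨σ, rfl⟩ := stdP_support a b N (Finsupp.support_smul hw)
        exact Finset.mem_image_of_mem _ (Finset.mem_univ σ)
      rw [Finset.sum_subset hsub (by
        intro w _ hw
        rw [Finsupp.notMem_support_iff.1 hw]
        simp)]
      rw [Finset.sum_image (fun σ _ τ _ h => wrdw_inj hab h)]
      have : ∀ σ ∈ (Finset.univ : Finset (Perm (Fin N))),
          ‖(c • stdP d a b N).coeff (wrdw a b N σ)‖ ^ 2 = (N.factorial : ℝ)⁻¹ :=
        fun σ _ => hnorm σ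
      rw [Finset.sum_congr rfl this, Finset.sum_const, Finset.card_univ,
        Fintype.card_perm, Fintype.card_fin, nsmul_eq_mul]
      rw [mul_inv_cancel₀ hfac.ne']
    rw [h2Norm, hsum, Real.sqrt_one]
  · intro m hm
    refine ⟨(m ^ 2 + 1) ^ 2, fun k hk X => ?_⟩
    set N := Nat.sqrt k
    have hN : m ^ 2 + 1 ≤ N := by
      have := Nat.sqrt_le_sqrt hk
      rwa [Nat.sqrt_eq' (m ^ 2 + 1)] at this
    rw [map_smul, freeEval_stdP a b N X]
    have hdep : ¬ LinearIndependent ℂ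
        (fun j : Fin N => ((blkL a b N (j : ℕ)).map X).prod) := by
      intro hli
      have hcard := hli.fintype_card_le_finrank
      rw [Fintype.card_fin, Module.finrank_matrix] at hcard
      simp only [Fintype.card_fin, Module.finrank_self, mul_one] at hcard
      nlinarith
    rw [AlternatingMap.map_linearDependent _ _ hdep, smul_zero]
end
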